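/- Let G be a finite non-abelian group of order pq² with p < q primes and trivial center. Then for every Sylow subgroup S of G and every nonidentity x ∈ S, the centralizer C_G(x) equals S; consequently |Cent(G)| = q² + 2. -/

import Mathlib

def Cent (G : Type*) [Group G] : Set (Subgroup G) :=
  {H | ∃ x : G, H = Subgroup.centralizer {x}}

open Subgroup

section Aux
variable {G : Type*} [Group G] [Finite G] {p q : ℕ} [hp : Fact p.Prime] [hq : Fact q.Prime]

private lemma cardSq (hpq : p ≠ q) (hcard : Nat.card G = p * q ^ 2) (S : Sylow q G) :
    Nat.card S = q ^ 2 := by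
  rw [S.card_eq_multiplicity, hcard,
    Nat.factorization_mul hp.out.ne_zero (pow_ne_zero 2 hq.out.ne_zero)]
  simp [hp.out.factorization, hq.out.factorization, Nat.factorization_pow,
    Finsupp.single_apply, hpq, Ne.symm hpq]

private lemma cardSp (hpq : p ≠ q) (hcard : Nat.card G = p * q ^ 2) (P : Sylow p G) :
    Nat.card P = p := by
  rw [P.card_eq_multiplicity, hcard,
    Nat.factorization_mul hp.out.ne_zero (pow_ne_zero 2 hq.out.ne_zero)]
  simp [hp.out.factorization, hq.out.factorization, Nat.factorization_pow,
    Finsupp.single_apply, hpq, Ne.symm hpq]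

private lemma sylow_finite' : Finite (Sylow p G) :=
  Finite.of_injective (fun P : Sylow p G => (P : Set G)) (fun _ _ h => SetLike.coe_injective' h)

/-- Centralizer of a nontrivial element of a Sylow q-subgroup is that subgroup. -/
private lemma lemA (hpq : p ≠ q) (hcard : Nat.card G = p * q ^ 2) (hz : center G = ⊥)
    (S : Sylow q G) {x : G} (hx : x ∈ S) (hx1 : x ≠ 1) :
    centralizer ({x} : Set G) = (S : Subgroup G) := by
  have hSq : Nat.card S = q ^ 2 := cardSq hpq hcard S
  set C := centralizer ({x} : Set G) with hC
  have hSC : (S : Subgroup G) ≤ C := by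
    intro s hs
    rw [hC, mem_centralizer_singleton_iff]
    exact congrArg Subtype.val
      (IsPGroup.commutative_of_card_eq_prime_sq hSq (⟨s, hs⟩ : S) (⟨x, hx⟩ : S))
  have hq2 : q ^ 2 ∣ Nat.card C := hSq ▸ card_dvd_of_le hSC
  have hCd : Nat.card C ∣ p * q ^ 2 := hcard ▸ card_subgroup_dvd_card C
  have hne : C ≠ ⊤ := by
    intro h
    have hxc : x ∈ center G := centralizer_eq_top_iff_subset.mp h rfl
    rw [hz, mem_bot] at hxc
    exact hx1 hxc
  obtain ⟨e, he⟩ := hq2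
  have hep : e ∣ p := by
    have : q ^ 2 * e ∣ q ^ 2 * p := by
      rw [← he, mul_comm (q ^ 2) p]; exact hCd
    exact (mul_dvd_mul_iff_left (pow_ne_zero 2 hq.out.ne_zero)).mp this
  have hcc : Nat.card C = q ^ 2 := by
    rcases (Nat.Prime.eq_one_or_self_of_dvd hp.out e hep) with h1 | h1
    · rw [he, h1, mul_one]
    · exfalso
      apply hne
      apply Subgroup.eq_top_of_card_eq
      rw [he, h1, hcard, mul_comm]
  exact (Subgroup.eq_of_le_of_card_ge hSC ((hcc.trans hSq.symm).le)).symm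

/-- Centralizer of a nontrivial element of a Sylow p-subgroup is that subgroup. -/
private lemma lemB (hpq : p < q) (hcard : Nat.card G = p * q ^ 2) (hz : center G = ⊥)
    (P : Sylow p G) {x : G} (hx : x ∈ P) (hx1 : x ≠ 1) :
    centralizer ({x} : Set G) = (P : Subgroup G) := by
  have hpq' : p ≠ q := ne_of_lt hpq
  have hPp : Nat.card P = p := cardSp hpq' hcard P
  have hxo : orderOf x = p := by
    have h1 : orderOf (⟨x, hx⟩ : P) ∣ Nat.card P := orderOf_dvd_natCard _
    rw [Subgroup.orderOf_mk, hPp] at h1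
    rcases (hp.out.eq_one_or_self_of_dvd _ h1) with h | h
    · exact absurd (orderOf_eq_one_iff.mp h) hx1
    · exact h
  set C := centralizer ({x} : Set G) with hC
  have hPx : (P : Subgroup G) = zpowers x := by
    refine (Subgroup.eq_of_le_of_card_ge (zpowers_le.mpr hx) ?_).symm
    rw [hPp, Nat.card_zpowers, hxo]
  have hPC : (P : Subgroup G) ≤ C := by
    rw [hPx]
    rintro g hg
    obtain ⟨n, rfl⟩ := hg
    rw [hC, mem_centralizer_singleton_iff]
    exact ((Commute.refl x).zpow_left n)
  have hqC : ¬ q ∣ Nat.card C := by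
    intro hdvd
    obtain ⟨y, hy⟩ := exists_prime_orderOf_dvd_card' (G := C) q hdvd
    have hyo : orderOf (y : G) = q := by rw [Subgroup.orderOf_coe, hy]
    have hyp : IsPGroup q (zpowers (y : G)) :=
      IsPGroup.of_card (by rw [Nat.card_zpowers, hyo, pow_one])
    obtain ⟨S, hS⟩ := hyp.exists_le_sylow
    have hymem : (y : G) ∈ S := hS (mem_zpowers _)
    have hy1 : (y : G) ≠ 1 := by
      intro h
      rw [h, orderOf_one] at hyo
      exact hq.out.ne_one hyo.symm
    have hcy := lemA hpq' hcard hz S hymem hy1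
    have hxS : x ∈ (S : Subgroup G) := by
      rw [← hcy, mem_centralizer_singleton_iff]
      exact (mem_centralizer_singleton_iff.mp y.2).symm
    have hdvd2 : p ∣ q ^ 2 := by
      have h3 : orderOf (⟨x, hxS⟩ : S) ∣ Nat.card S := orderOf_dvd_natCard _
      rwa [Subgroup.orderOf_mk, hxo, cardSq hpq' hcard S] at h3
    have := (Nat.prime_dvd_prime_iff_eq hp.out hq.out).mp (hp.out.dvd_of_dvd_pow hdvd2)
    exact hpq' this
  have hCd : Nat.card C ∣ p * q ^ 2 := hcard ▸ card_subgroup_dvd_card C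
  have hcop : (Nat.card C).Coprime (q ^ 2) :=
    (Nat.Coprime.pow_right 2 ((hq.out.coprime_iff_not_dvd.mpr hqC).symm))
  have hdp : Nat.card C ∣ p := hcop.dvd_of_dvd_mul_right hCd
  have hpC : p ∣ Nat.card C := hPp ▸ card_dvd_of_le hPC
  have hcc : Nat.card C = p := Nat.dvd_antisymm hdp hpC
  exact (Subgroup.eq_of_le_of_card_ge hPC (by rw [hcc, hPp])).symm

private lemma sylowq_subsingleton (hpq : p < q) (hcard : Nat.card G = p * q ^ 2) :
    Subsingleton (Sylow q G) := by
  haveI : Finite (Sylow q G) := sylow_finite'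
  obtain ⟨S⟩ := (Sylow.nonempty : Nonempty (Sylow q G))
  have hpq' : p ≠ q := ne_of_lt hpq
  have hidx : (S : Subgroup G).index = p := by
    have h1 : Nat.card S * (S : Subgroup G).index = Nat.card G := Subgroup.card_mul_index _
    rw [cardSq hpq' hcard S, hcard, mul_comm p (q ^ 2)] at h1
    exact Nat.eq_of_mul_eq_mul_left (pow_pos hq.out.pos 2) h1
  have hdvd : Nat.card (Sylow q G) ∣ p := hidx ▸ Sylow.card_dvd_index S
  have hmod : Nat.card (Sylow q G) ≡ 1 [MOD q] := card_sylow_modEq_one q G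
  have hone : Nat.card (Sylow q G) = 1 := by
    rcases (hp.out.eq_one_or_self_of_dvd _ hdvd) with h | h
    · exact h
    · exfalso
      rw [h] at hmod
      have h2 : p % q = 1 % q := hmod
      rw [Nat.mod_eq_of_lt hpq, Nat.mod_eq_of_lt hq.out.one_lt] at h2
      exact hp.out.ne_one h2
  exact (Nat.card_eq_one_iff_unique.mp hone).1

private lemma sylowq_normal (hpq : p < q) (hcard : Nat.card G = p * q ^ 2) (S : Sylow q G) :
    (S : Subgroup G).Normal := by
  haveI := sylowq_subsingleton hpq hcard (G := G)
  refine normalizer_eq_top_iff.mp ?_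
  rw [eq_top_iff']
  intro g
  exact Sylow.smul_eq_iff_mem_normalizer.mp (Subsingleton.elim _ _)

private lemma mem_sylowq_of_order (hpq : p < q) (hcard : Nat.card G = p * q ^ 2)
    (S : Sylow q G) {y : G} (hy : orderOf y = q) : y ∈ (S : Subgroup G) := by
  haveI := sylowq_subsingleton hpq hcard (G := G)
  have hyp : IsPGroup q (zpowers y) :=
    IsPGroup.of_card (by rw [Nat.card_zpowers, hy, pow_one])
  obtain ⟨S', hS'⟩ := hyp.exists_le_sylow
  have : S' = S := Subsingleton.elim _ _
  exact this ▸ hS' (mem_zpowers _)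

private lemma norm_eq (hpq : p < q) (hcard : Nat.card G = p * q ^ 2) (hz : center G = ⊥)
    (P : Sylow p G) : normalizer (P : Set G) = P := by
  have hpq' : p ≠ q := ne_of_lt hpq
  have hPp : Nat.card P = p := cardSp hpq' hcard P
  set N := normalizer (P : Set G) with hN
  have hPN : (P : Subgroup G) ≤ N := le_normalizer
  have hcN : Nat.card N = p := by
    by_contra hne
    have hpN : p ∣ Nat.card N := hPp ▸ card_dvd_of_le hPN
    have hNd : Nat.card N ∣ p * q ^ 2 := hcard ▸ card_subgroup_dvd_card N
    obtain ⟨m, hm⟩ := hpN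
    have hmd : m ∣ q ^ 2 := by
      have : p * m ∣ p * q ^ 2 := hm ▸ hNd
      exact (mul_dvd_mul_iff_left hp.out.ne_zero).mp this
    have hm1 : m ≠ 1 := by
      intro h; rw [h, mul_one] at hm; exact hne hm
    have hqm : q ∣ m := by
      by_contra hq'
      exact hm1 (Nat.Coprime.eq_one_of_dvd
        ((Nat.Coprime.pow_left 2 (hq.out.coprime_iff_not_dvd.mpr hq')).symm) hmd)
    have hqN : q ∣ Nat.card N := hm ▸ Dvd.dvd.mul_left hqm p
    obtain ⟨y, hy⟩ := exists_prime_orderOf_dvd_card' (G := N) q hqN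
    have hyo : orderOf (y : G) = q := by rw [Subgroup.orderOf_coe, hy]
    have hy1 : (y : G) ≠ 1 := by
      intro h; rw [h, orderOf_one] at hyo; exact hq.out.ne_one hyo.symm
    obtain ⟨Q⟩ := (Sylow.nonempty : Nonempty (Sylow q G))
    haveI hQn : (Q : Subgroup G).Normal := sylowq_normal hpq hcard Q
    have hyQ : (y : G) ∈ (Q : Subgroup G) := mem_sylowq_of_order hpq hcard Q hyo
    have hPbot : (P : Subgroup G) ≠ ⊥ := by
      intro h
      have := hPp
      rw [h, Subgroup.card_bot] at this
      exact hp.out.ne_one this.symm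
    obtain ⟨x, hx, hx1⟩ := ((P : Subgroup G).bot_or_exists_ne_one).resolve_left hPbot
    have hyx : (y : G) * x * (y : G)⁻¹ ∈ (P : Subgroup G) :=
      (mem_normalizer_iff.mp y.2 x).mp hx
    have hcP : (y : G) * x * (y : G)⁻¹ * x⁻¹ ∈ (P : Subgroup G) := mul_mem hyx (inv_mem hx)
    have hcQ : (y : G) * x * (y : G)⁻¹ * x⁻¹ ∈ (Q : Subgroup G) := by
      have h1 : x * (y : G)⁻¹ * x⁻¹ ∈ (Q : Subgroup G) := hQn.conj_mem _ (inv_mem hyQ) x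
      have h2 : (y : G) * x * (y : G)⁻¹ * x⁻¹ = (y : G) * (x * (y : G)⁻¹ * x⁻¹) := by
        simp only [mul_assoc]
      rw [h2]
      exact mul_mem hyQ h1
    have hdisj : Disjoint (P : Subgroup G) (Q : Subgroup G) :=
      IsPGroup.disjoint_of_ne p q hpq' _ _ P.isPGroup' Q.isPGroup'
    have hc1 : (y : G) * x * (y : G)⁻¹ * x⁻¹ = 1 := Subgroup.disjoint_def.mp hdisj hcP hcQ
    have h4 : (y : G) * x * (y : G)⁻¹ = x := mul_inv_eq_one.mp hc1
    have h5 : (y : G) * x = x * (y : G) := by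
      have h6 := congrArg (· * (y : G)) h4
      simpa [mul_assoc] using h6
    have hxQ : x ∈ (Q : Subgroup G) := by
      rw [← lemA hpq' hcard hz Q hyQ hy1, mem_centralizer_singleton_iff]
      exact h5.symm
    have hxo : orderOf x = p := by
      have h1 : orderOf (⟨x, hx⟩ : P) ∣ Nat.card P := orderOf_dvd_natCard _
      rw [Subgroup.orderOf_mk, hPp] at h1
      rcases (hp.out.eq_one_or_self_of_dvd _ h1) with h | h
      · exact absurd (orderOf_eq_one_iff.mp h) hx1
      · exact h
    have hdvd2 : p ∣ q ^ 2 := by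
      have h3 : orderOf (⟨x, hxQ⟩ : (Q : Subgroup G)) ∣ Nat.card Q := orderOf_dvd_natCard _
      rwa [Subgroup.orderOf_mk, hxo, cardSq hpq' hcard Q] at h3
    exact hpq' ((Nat.prime_dvd_prime_iff_eq hp.out hq.out).mp (hp.out.dvd_of_dvd_pow hdvd2))
  exact (Subgroup.eq_of_le_of_card_ge hPN (by rw [hcN, hPp])).symm

end Aux

theorem centralizer_eq_sylow_of_trivial_center
    (G : Type*) [Group G] [Finite G] (p q : ℕ)
    (hp : p.Prime) (hq : q.Prime) (hpq : p < q)
    (hcard : Nat.card G = p * q ^ 2)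
    (hna : ¬ ∀ a b : G, a * b = b * a)
    (hz : Subgroup.center G = ⊥) :
    (∀ (ℓ : ℕ) (_ : Fact ℓ.Prime) (S : Sylow ℓ G) (x : G),
        x ∈ (S : Subgroup G) → x ≠ 1 →
        Subgroup.centralizer ({x} : Set G) = (S : Subgroup G)) ∧
    (Cent G).ncard = q ^ 2 + 2 := by
  haveI hpf : Fact p.Prime := ⟨hp⟩
  haveI hqf : Fact q.Prime := ⟨hq⟩
  have hpq' : p ≠ q := ne_of_lt hpq
  constructor
  · intro ℓ hℓ S x hxS hx1
    haveI := hℓ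
    by_cases hlq : ℓ = q
    · subst hlq
      exact lemA hpq' hcard hz S hxS hx1
    by_cases hlp : ℓ = p
    · subst hlp
      exact lemB hpq hcard hz S hxS hx1
    · exfalso
      have hnd : ¬ ℓ ∣ Nat.card G := by
        rw [hcard]
        intro hd
        rcases (Nat.Prime.dvd_mul hℓ.out).mp hd with h | h
        · exact hlp ((Nat.prime_dvd_prime_iff_eq hℓ.out hp).mp h)
        · exact hlq ((Nat.prime_dvd_prime_iff_eq hℓ.out hq).mp
            (hℓ.out.dvd_of_dvd_pow h))
      have hS1 : Nat.card S = 1 := by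
        rw [S.card_eq_multiplicity, Nat.factorization_eq_zero_of_not_dvd hnd, pow_zero]
      have : (S : Subgroup G) = ⊥ := Subgroup.card_eq_one.mp hS1
      rw [this, mem_bot] at hxS
      exact hx1 hxS
  · -- cardinality of Cent G
    haveI hfinp : Finite (Sylow p G) := sylow_finite'
    haveI hfinq : Finite (Sylow q G) := sylow_finite'
    obtain ⟨Q⟩ := (Sylow.nonempty : Nonempty (Sylow q G))
    obtain ⟨P0⟩ := (Sylow.nonempty : Nonempty (Sylow p G))
    have hnp : Nat.card (Sylow p G) = q ^ 2 := by
      rw [Sylow.card_eq_index_normalizer P0, norm_eq hpq hcard hz P0]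
      have h1 : Nat.card P0 * (P0 : Subgroup G).index = Nat.card G := Subgroup.card_mul_index _
      rw [cardSp hpq' hcard P0, hcard] at h1
      exact Nat.eq_of_mul_eq_mul_left hp.pos h1
    have htop : centralizer ({(1 : G)} : Set G) = ⊤ := by
      rw [eq_top_iff']
      intro g
      rw [mem_centralizer_singleton_iff, mul_one, one_mul]
    have hset : Cent G = insert ⊤ (insert (Q : Subgroup G)
        (Set.range (fun P : Sylow p G => (P : Subgroup G)))) := by
      ext H
      simp only [Cent, Set.mem_setOf_eq, Set.mem_insert_iff, Set.mem_range]
      constructor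
      · rintro ⟨x, rfl⟩
        by_cases hx1 : x = 1
        · subst hx1
          left
          exact htop
        by_cases hxQ : x ∈ (Q : Subgroup G)
        · right; left
          exact lemA hpq' hcard hz Q hxQ hx1
        · right; right
          have hn0 : orderOf x ≠ 0 := (orderOf_pos x).ne'
          have hqn : ¬ q ∣ orderOf x := by
            intro hdvd
            have hgcd : Nat.gcd (orderOf x) (orderOf x / q) = orderOf x / q :=
              Nat.gcd_eq_right (Nat.div_dvd_of_dvd hdvd)
            have hyo : orderOf (x ^ (orderOf x / q)) = q := by
              rw [orderOf_pow, hgcd, Nat.div_div_self hdvd hn0]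
            have hyQ : x ^ (orderOf x / q) ∈ (Q : Subgroup G) :=
              mem_sylowq_of_order hpq hcard Q hyo
            have hy1 : x ^ (orderOf x / q) ≠ 1 := by
              intro h
              rw [h, orderOf_one] at hyo
              exact hq.ne_one hyo.symm
            have hxc : x ∈ centralizer ({x ^ (orderOf x / q)} : Set G) :=
              mem_centralizer_singleton_iff.mpr ((Commute.refl x).pow_right _)
            rw [lemA hpq' hcard hz Q hyQ hy1] at hxc
            exact hxQ hxc
          have hdvd : orderOf x ∣ p * q ^ 2 := hcard ▸ orderOf_dvd_natCard x
          have hop : orderOf x ∣ p :=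
            (Nat.Coprime.pow_right 2 ((hq.coprime_iff_not_dvd.mpr hqn).symm)).dvd_of_dvd_mul_right
              hdvd
          have hxo : orderOf x = p := by
            rcases (hp.eq_one_or_self_of_dvd _ hop) with h | h
            · exact absurd (orderOf_eq_one_iff.mp h) hx1
            · exact h
          have hxp : IsPGroup p (zpowers x) :=
            IsPGroup.of_card (by rw [Nat.card_zpowers, hxo, pow_one])
          obtain ⟨P, hP⟩ := hxp.exists_le_sylow
          exact ⟨P, (lemB hpq hcard hz P (hP (mem_zpowers x)) hx1).symm⟩
      · rintro (rfl | rfl | ⟨P, rfl⟩)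
        · exact ⟨1, htop.symm⟩
        · have hQbot : (Q : Subgroup G) ≠ ⊥ := by
            intro h
            have := cardSq hpq' hcard Q
            rw [h, Subgroup.card_bot] at this
            exact (Nat.one_lt_pow two_ne_zero hq.one_lt).ne this
          obtain ⟨x, hx, hx1⟩ := ((Q : Subgroup G).bot_or_exists_ne_one).resolve_left hQbot
          exact ⟨x, (lemA hpq' hcard hz Q hx hx1).symm⟩
        · have hPbot : (P : Subgroup G) ≠ ⊥ := by
            intro h
            have := cardSp hpq' hcard P
            rw [h, Subgroup.card_bot] at this
            exact hp.ne_one this.symm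
          obtain ⟨x, hx, hx1⟩ := ((P : Subgroup G).bot_or_exists_ne_one).resolve_left hPbot
          exact ⟨x, (lemB hpq hcard hz P hx hx1).symm⟩
    rw [hset]
    have hinj : Function.Injective (fun P : Sylow p G => (P : Subgroup G)) :=
      fun a b h => Sylow.ext h
    have hfin : (Set.range (fun P : Sylow p G => (P : Subgroup G))).Finite :=
      Set.finite_range _
    have hq2q : q ≤ q ^ 2 := Nat.le_self_pow two_ne_zero q
    have hQr : (Q : Subgroup G) ∉ Set.range (fun P : Sylow p G => (P : Subgroup G)) := by
      rintro ⟨P, hP⟩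
      have hc : Nat.card P = Nat.card Q := congrArg (fun K : Subgroup G => Nat.card K) hP
      rw [cardSp hpq' hcard P, cardSq hpq' hcard Q] at hc
      omega
    have hT : (⊤ : Subgroup G) ∉ insert (Q : Subgroup G)
        (Set.range (fun P : Sylow p G => (P : Subgroup G))) := by
      have hcT : Nat.card (⊤ : Subgroup G) = p * q ^ 2 := by
        rw [Subgroup.card_top, hcard]
      rintro (h | ⟨P, hP⟩)
      · have hc : Nat.card (⊤ : Subgroup G) = Nat.card Q :=
          congrArg (fun K : Subgroup G => Nat.card K) h
        rw [hcT, cardSq hpq' hcard Q] at hc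
        have hp1 : p = 1 := by
          have := Nat.eq_of_mul_eq_mul_right (pow_pos hq.pos 2) (hc.trans (one_mul (q ^ 2)).symm)
          exact this
        exact hp.ne_one hp1
      · have hc : Nat.card P = Nat.card (⊤ : Subgroup G) :=
          congrArg (fun K : Subgroup G => Nat.card K) hP
        rw [hcT, cardSp hpq' hcard P] at hc
        have : q ^ 2 = 1 := by
          have h2 := hc.symm
          have hp0 : 0 < p := hp.pos
          nlinarith [hq.one_lt, hq2q]
        exact (Nat.one_lt_pow two_ne_zero hq.one_lt).ne' this
    rw [Set.ncard_insert_of_notMem hT (hfin.insert _),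
      Set.ncard_insert_of_notMem hQr hfin]
    have hr : (Set.range (fun P : Sylow p G => (P : Subgroup G))).ncard = q ^ 2 := by
      rw [← Nat.card_coe_set_eq, Nat.card_range_of_injective hinj, hnp]
    rw [hr]
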